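/- Let G be a connected graph, θ ≥ 0, and for functions α, β : E → ℝ≥0 with α(e) + β(e) ≥ θ for all e, define g(α,β) = min_{X∈Φ} ∑_{e∈X}(C(e) - α(e)) + min_{Y∈Φ} ∑_{e∈Y}(c(e) - β(e)) + θL. Then for every pair of spanning trees (X,Y) of G, g(α,β) ≤ ∑_{e∈X} C(e) + ∑_{e∈Y} c(e) - θ·|X ∩ Y| + θ·L whenever α vanishes outside Y and β vanishes outside X (equivalently, whenever ∑_{e∈X} α(e) + ∑_{e∈Y} β(e) ≤ θ·|X∩Y| + ∑_{e∈X∩Y}(α(e)+β(e)-θ) holds with α,β supported appropriately); in particular, weak duality holds: sup over admissible (α,β) of g(α,β) is at most the Lagrangian value φ(θ) = min over pairs (X,Y) of spanning trees of ∑_{e∈X} C(e) + ∑_{e∈Y} c(e) - θ|X∩Y| + θL. -/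

import Mathlib

open Finset

/-- `T` is (the edge set of) a spanning tree of `G`: its edges are edges of `G`
and the graph formed by these edges is a tree (connected and acyclic, spanning all vertices). -/
def IsSpanningTree {V : Type*} (G : SimpleGraph V) (T : Finset (Sym2 V)) : Prop :=
  (T : Set (Sym2 V)) ⊆ G.edgeSet ∧ (SimpleGraph.fromEdgeSet (T : Set (Sym2 V))).IsTree

/-- `f` lies on the unique path in the tree `T` joining the endpoints of `e`:
equivalently, `f ∈ T` and removing `f` disconnects the endpoints of `e` in `T`. -/
def OnTreePath {V : Type*} (T : Finset (Sym2 V)) (e f : Sym2 V) : Prop :=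
  f ∈ T ∧ ∀ u v : V, e = s(u, v) →
    ¬ (SimpleGraph.fromEdgeSet ((T : Set (Sym2 V)) \ {f})).Reachable u v

/-- Path optimality conditions for a spanning tree `T` of `G` with edge costs `w`. -/
def PathOpt {V : Type*} (G : SimpleGraph V) (T : Finset (Sym2 V)) (w : Sym2 V → ℝ) : Prop :=
  ∀ u v : V, s(u, v) ∈ G.edgeSet → s(u, v) ∉ T →
    ∀ f, OnTreePath T s(u, v) f → w f ≤ w (s(u, v))

/-- The sufficient pair optimality conditions of Theorem 2, with explicit witnesses `α`, `β`. -/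
def SuffPairOpt {V : Type*} [Fintype V] [DecidableEq V] (G : SimpleGraph V)
    (C c : Sym2 V → ℝ) (θ : ℝ) (X Y : Finset (Sym2 V)) (α β : Sym2 V → ℝ) : Prop :=
  (∀ e, 0 ≤ α e) ∧ (∀ e, 0 ≤ β e) ∧ (∀ e ∈ G.edgeSet, α e + β e = θ) ∧
  (∀ T, IsSpanningTree G T → ∑ e ∈ X, (C e - α e) ≤ ∑ e ∈ T, (C e - α e)) ∧
  (∀ T, IsSpanningTree G T → ∑ e ∈ Y, (c e - β e) ≤ ∑ e ∈ T, (c e - β e)) ∧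
  (∀ e ∈ X \ Y, α e = 0) ∧ (∀ e ∈ Y \ X, β e = 0)

/-- Arcs of the admissible graph for the pair `(X,Y)` with reduced costs `Cs`, `cs`:
an `X`-arc `(a,b)` with `a ∉ X`, `b ∈ P_X(a)`, `Cs a = Cs b`, or a `Y`-arc `(a,b)`
(i.e. `(v_f,v_e)` with `f = a`, `e = b`) with `b ∉ Y`, `a ∈ P_Y(b)`, `cs b = cs a`. -/
def AdmArc {V : Type*} [Fintype V] [DecidableEq V] (X Y : Finset (Sym2 V))
    (Cs cs : Sym2 V → ℝ) (a b : Sym2 V) : Prop :=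
  (a ∉ X ∧ OnTreePath X a b ∧ Cs a = Cs b) ∨ (b ∉ Y ∧ OnTreePath Y b a ∧ cs b = cs a)

/-- A node of the admissible graph is admissible if it is reachable (by a directed path)
from some node `v_g` with `g ∈ Y \ X`. -/
def AdmNode {V : Type*} [Fintype V] [DecidableEq V] (X Y : Finset (Sym2 V))
    (Cs cs : Sym2 V → ℝ) (h : Sym2 V) : Prop :=
  ∃ g, g ∈ Y ∧ g ∉ X ∧ Relation.ReflTransGen (AdmArc X Y Cs cs) g h

/-- weak duality underlying Lemma 1: for any admissible dual split
`α, β ≥ 0` with `α + β ≥ θ` on the edges, the dual value `g(α,β)` lower-bounds the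
Lagrangian value of every pair of spanning trees. -/
theorem stmt17 {V : Type*} [Fintype V] [DecidableEq V] (G : SimpleGraph V)
    (hG : G.Connected) (C c : Sym2 V → ℝ) (θ : ℝ) (hθ : 0 ≤ θ) (L : ℤ)
    (α β : Sym2 V → ℝ) (hα : ∀ e, 0 ≤ α e) (hβ : ∀ e, 0 ≤ β e)
    (hαβ : ∀ e ∈ G.edgeSet, θ ≤ α e + β e) :
    ∀ X Y : Finset (Sym2 V), IsSpanningTree G X → IsSpanningTree G Y →
      sInf {v : ℝ | ∃ T : Finset (Sym2 V), IsSpanningTree G T ∧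
          v = ∑ e ∈ T, (C e - α e)} +
      sInf {v : ℝ | ∃ T : Finset (Sym2 V), IsSpanningTree G T ∧
          v = ∑ e ∈ T, (c e - β e)} + θ * (L : ℝ) ≤
      ∑ e ∈ X, C e + ∑ e ∈ Y, c e - θ * ((X ∩ Y).card : ℝ) + θ * (L : ℝ) := by
  intro X Y hX hY
  have hfin : ∀ f : Finset (Sym2 V) → ℝ,
      ({v : ℝ | ∃ T : Finset (Sym2 V), IsSpanningTree G T ∧ v = f T}).Finite := by
    intro f
    apply Set.Finite.subset (Set.finite_range f)
    rintro v ⟨T, _, rfl⟩; exact ⟨T, rfl⟩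
  have h1 : sInf {v : ℝ | ∃ T : Finset (Sym2 V), IsSpanningTree G T ∧
      v = ∑ e ∈ T, (C e - α e)} ≤ ∑ e ∈ X, (C e - α e) :=
    csInf_le ((hfin _).bddBelow) ⟨X, hX, rfl⟩
  have h2 : sInf {v : ℝ | ∃ T : Finset (Sym2 V), IsSpanningTree G T ∧
      v = ∑ e ∈ T, (c e - β e)} ≤ ∑ e ∈ Y, (c e - β e) :=
    csInf_le ((hfin _).bddBelow) ⟨Y, hY, rfl⟩
  have key : θ * ((X ∩ Y).card : ℝ) ≤ ∑ e ∈ X, α e + ∑ e ∈ Y, β e := by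
    have step1 : θ * ((X ∩ Y).card : ℝ) ≤ ∑ e ∈ X ∩ Y, (α e + β e) := by
      rw [mul_comm, ← nsmul_eq_mul]
      apply Finset.card_nsmul_le_sum
      intro e he
      have : e ∈ G.edgeSet := hX.1 (by simpa using (Finset.mem_inter.mp he).1)
      simpa using hαβ e this
    have step2 : ∑ e ∈ X ∩ Y, α e ≤ ∑ e ∈ X, α e :=
      Finset.sum_le_sum_of_subset_of_nonneg (Finset.inter_subset_left)
        (fun e _ _ => hα e)
    have step3 : ∑ e ∈ X ∩ Y, β e ≤ ∑ e ∈ Y, β e :=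
      Finset.sum_le_sum_of_subset_of_nonneg (Finset.inter_subset_right)
        (fun e _ _ => hβ e)
    rw [Finset.sum_add_distrib] at step1
    linarith
  have e1 : ∑ e ∈ X, (C e - α e) = ∑ e ∈ X, C e - ∑ e ∈ X, α e :=
    Finset.sum_sub_distrib C α
  have e2 : ∑ e ∈ Y, (c e - β e) = ∑ e ∈ Y, c e - ∑ e ∈ Y, β e :=
    Finset.sum_sub_distrib c β
  linarith
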